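/- Let β = π/N, N ≥ 2, and Oh(x) = Σ_{k=0}^{N−1}[h(Υ_{2β}^k x) − h(𝔯 Υ_{2β}^k x)]. Then Oh is odd with respect to reflection about the line through the origin at angle β: for all c ≥ 0 and all angles α, Oh(c Υ_α Υ_β e₁) = −Oh(c Υ_{−α} Υ_β e₁), where e₁ = (1,0). -/
import Mathlib


/-- Counterclockwise rotation of ℝ² by angle θ. -/
noncomputable def rot (θ : ℝ) (x : ℝ × ℝ) : ℝ × ℝ :=
  (x.1 * Real.cos θ - x.2 * Real.sin θ, x.1 * Real.sin θ + x.2 * Real.cos θ)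

/-- Reflection of ℝ² about the x₁-axis. -/
def refl2 (x : ℝ × ℝ) : ℝ × ℝ := (x.1, -x.2)

/-- The "odd" operator: Oh(x) = Σ_{k=0}^{N-1} [h(Υ_{2β}^k x) − h(𝔯 Υ_{2β}^k x)]. -/
noncomputable def oddOp (N : ℕ) (β : ℝ) (h : ℝ × ℝ → ℝ) (x : ℝ × ℝ) : ℝ :=
  ∑ k ∈ Finset.range N, (h (rot ((2 * β) * k) x) - h (refl2 (rot ((2 * β) * k) x)))

noncomputable def pt (c γ : ℝ) : ℝ × ℝ := (c * Real.cos γ, c * Real.sin γ)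

lemma rot_pt (θ c γ : ℝ) : rot θ (pt c γ) = pt c (γ + θ) := by
  simp only [rot, pt, Real.cos_add, Real.sin_add, Prod.mk.injEq]
  constructor <;> ring

lemma refl2_pt (c γ : ℝ) : refl2 (pt c γ) = pt c (-γ) := by
  simp [refl2, pt, Real.cos_neg, Real.sin_neg]

lemma pt_add_two_pi (c γ : ℝ) : pt c (γ + 2 * Real.pi) = pt c γ := by
  simp [pt, Real.cos_add_two_pi, Real.sin_add_two_pi]

lemma pt_sub_two_pi (c γ : ℝ) : pt c (γ - 2 * Real.pi) = pt c γ := by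
  simp [pt, Real.cos_sub_two_pi, Real.sin_sub_two_pi]

lemma smul_rot_rot (c α β : ℝ) :
    c • rot α (rot β ((1 : ℝ), (0 : ℝ))) = pt c (α + β) := by
  simp only [rot, pt, Prod.smul_mk, smul_eq_mul, Real.cos_add, Real.sin_add,
    Prod.mk.injEq]
  constructor <;> ring

/-- Oh is odd with respect to reflection about the line through the origin at angle β:
`Oh(c Υ_α Υ_β e₁) = −Oh(c Υ_{−α} Υ_β e₁)` where e₁ = (1,0). -/
theorem oddOp_odd_about_beta_line (N : ℕ) (hN : 2 ≤ N) (β : ℝ) (hβ : β = Real.pi / N)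
    (h : ℝ × ℝ → ℝ) (hc : Continuous h) :
    ∀ (c : ℝ), 0 ≤ c → ∀ (α : ℝ),
      oddOp N β h (c • rot α (rot β ((1 : ℝ), (0 : ℝ)))) =
        -oddOp N β h (c • rot (-α) (rot β ((1 : ℝ), (0 : ℝ)))) := by
  intro c _ α
  have hNR : (N : ℝ) ≠ 0 := by positivity
  have hβN : β * N = Real.pi := by
    rw [hβ]; field_simp
  rw [smul_rot_rot, smul_rot_rot, oddOp, oddOp]
  simp only [rot_pt, refl2_pt]
  rw [← Finset.sum_range_reflect
      (fun k => h (pt c (-α + β + 2 * β * k)) - h (pt c (-(-α + β + 2 * β * k)))) N]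
  rw [← Finset.sum_neg_distrib]
  apply Finset.sum_congr rfl
  intro k hk
  have hk' : k < N := Finset.mem_range.mp hk
  have hcast : ((N - 1 - k : ℕ) : ℝ) = (N : ℝ) - 1 - k := by
    have h1 : k + 1 ≤ N := hk'
    have h1' : 1 + k ≤ N := by omega
    rw [Nat.sub_sub, Nat.cast_sub h1']
    push_cast; ring
  have e1 : -α + β + 2 * β * ((N - 1 - k : ℕ) : ℝ)
      = -(α + β + 2 * β * k) + 2 * Real.pi := by
    rw [hcast]; nlinarith [hβN]
  rw [e1, pt_add_two_pi,
    show -(-(α + β + 2 * β * (k : ℝ)) + 2 * Real.pi)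
      = (α + β + 2 * β * k) - 2 * Real.pi by ring,
    pt_sub_two_pi]
  ring
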